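/- For all integers L ≥ 0 and all integers a, [2L choose L−a]_q = ∑_{k=0}^{L} q^{(k²−a²)/2} [L choose k]_q · T_0(k,a). -/

import Mathlib

open Finset

/-- The variable `q`, realized as the generator of the field of rational functions over `ℚ`. -/
noncomputable def qq : RatFunc ℚ := RatFunc.X

/-- `(x)_n = ∏_{j=1}^n (1 - x^j)`. -/
noncomputable def qPoch (x : RatFunc ℚ) (n : ℕ) : RatFunc ℚ :=
  ∏ j ∈ Finset.range n, (1 - x ^ (j + 1))

/-- Gaussian binomial coefficient `[n choose k]_x`, zero unless `0 ≤ k ≤ n`. -/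
noncomputable def qBin (x : RatFunc ℚ) (n k : ℤ) : RatFunc ℚ :=
  if 0 ≤ k ∧ k ≤ n then qPoch x n.toNat / (qPoch x k.toNat * qPoch x (n - k).toNat) else 0

/-- The `q`-trinomial coefficient `[L, b; a]_2` in base `x`. -/
noncomputable def qTri (x : RatFunc ℚ) (L : ℕ) (b a : ℤ) : RatFunc ℚ :=
  ∑ k ∈ Finset.range (L + 1),
    x ^ ((k : ℤ) * (k + b)) * qBin x (L : ℤ) (k : ℤ) * qBin x ((L : ℤ) - k) ((k : ℤ) + a)

/-- The `q`-trinomial `T_n(L, a)`, written in terms of `s = q^{1/2}` (so the base is `s^2`):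
`T_n(L,a) = ∑ s^{r(r-n)} (s²)_L / ((s²)_{(L-a-r)/2} (s²)_{(L+a-r)/2} (s²)_r)`,
the sum over `r ≥ 0` with `L - a - r` even and `r ≤ L - |a|`; zero for `|a| > L`. -/
noncomputable def qT (s : RatFunc ℚ) (n : ℤ) (L : ℕ) (a : ℤ) : RatFunc ℚ :=
  ∑ r ∈ Finset.range (L + 1),
    if Even ((L : ℤ) - a - r) ∧ (r : ℤ) ≤ (L : ℤ) - |a| then
      s ^ ((r : ℤ) * ((r : ℤ) - n)) * qPoch (s ^ 2) L /
        (qPoch (s ^ 2) (((L : ℤ) - a - r) / 2).toNat *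
          qPoch (s ^ 2) (((L : ℤ) + a - r) / 2).toNat * qPoch (s ^ 2) r)
    else 0

/-- The Cartan matrix of the Lie algebra `A_n`. -/
def cartanA (n : ℕ) (i j : Fin n) : ℤ :=
  if i = j then 2 else if |(i : ℤ) - (j : ℤ)| = 1 then -1 else 0

lemma qq_pow_ne_one (m : ℕ) (hm : 1 ≤ m) : (qq:RatFunc ℚ)^m ≠ 1 := by
  unfold qq
  intro h
  rw [← RatFunc.algebraMap_X (K := ℚ), ← map_pow, ← map_one (algebraMap (Polynomial ℚ) (RatFunc ℚ))] at h
  have h2 := RatFunc.algebraMap_injective ℚ h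
  have := congrArg (fun p => Polynomial.coeff p 0) h2
  have hm0 : m ≠ 0 := by omega
  simp [Polynomial.coeff_X_pow, hm0] at this
  omega

lemma qq_ne_zero : (qq : RatFunc ℚ) ≠ 0 := RatFunc.X_ne_zero

-- abbreviations
noncomputable abbrev Q : RatFunc ℚ := qq ^ 2
noncomputable abbrev P (n : ℕ) : RatFunc ℚ := qPoch Q n

lemma P_ne_zero (n : ℕ) : P n ≠ 0 := by
  show qPoch Q n ≠ 0
  unfold qPoch
  apply Finset.prod_ne_zero_iff.mpr
  intro j _
  intro h
  have h1 : (Q : RatFunc ℚ) ^ (j+1) = 1 := by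
    have := sub_eq_zero.mp h
    exact this.symm
  rw [show (Q:RatFunc ℚ)^(j+1) = qq^(2*(j+1)) by rw [← pow_mul]] at h1
  exact qq_pow_ne_one _ (by omega) h1

lemma P_succ (n : ℕ) : P (n+1) = P n * (1 - Q ^ (n+1)) := Finset.prod_range_succ _ _

lemma P_zero : P 0 = 1 := rfl

-- basic qBin lemmas
lemma qBin_eq_zero_left {n k : ℤ} (h : k < 0) : qBin Q n k = 0 := by
  unfold qBin; rw [if_neg]; omega
lemma qBin_eq_zero_right {n k : ℤ} (h : n < k) : qBin Q n k = 0 := by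
  unfold qBin; rw [if_neg]; omega
lemma qBin_def {n k : ℤ} (h0 : 0 ≤ k) (h1 : k ≤ n) :
    qBin Q n k = P n.toNat / (P k.toNat * P (n-k).toNat) := by
  unfold qBin; rw [if_pos ⟨h0, h1⟩]

lemma qBin_nat (n k : ℕ) (h : k ≤ n) :
    qBin Q (n:ℤ) (k:ℤ) = P n / (P k * P (n-k)) := by
  rw [qBin_def (by positivity) (by exact_mod_cast h)]
  have h1 : ((n:ℤ)-(k:ℤ)).toNat = n - k := by omega
  simp [h1]

lemma qBin_zero (n : ℕ) : qBin Q (n:ℤ) 0 = 1 := by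
  rw [show (0:ℤ) = ((0:ℕ):ℤ) by norm_num, qBin_nat n 0 (by omega)]
  simp [P_zero]
  exact P_ne_zero n

lemma qBin_self (n : ℕ) : qBin Q (n:ℤ) (n:ℤ) = 1 := by
  rw [qBin_nat n n le_rfl]
  simp [P_zero]
  exact P_ne_zero n

lemma qBin_symm (n : ℕ) (k : ℤ) : qBin Q (n:ℤ) k = qBin Q (n:ℤ) ((n:ℤ) - k) := by
  by_cases h : 0 ≤ k ∧ k ≤ (n:ℤ)
  · rw [qBin_def h.1 h.2, qBin_def (by omega) (by omega)]
    rw [show (n:ℤ) - ((n:ℤ)-k) = k by ring]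
    ring
  · unfold qBin
    rw [if_neg h, if_neg (by omega)]

lemma one_sub_Q_pow_ne_zero (m : ℕ) : (1 : RatFunc ℚ) - Q ^ (m+1) ≠ 0 := by
  intro h
  have h1 : (Q : RatFunc ℚ) ^ (m+1) = 1 := (sub_eq_zero.mp h).symm
  rw [show (Q:RatFunc ℚ)^(m+1) = qq^(2*(m+1)) by rw [← pow_mul]] at h1
  exact qq_pow_ne_one _ (by omega) h1

lemma qBin_pascal (n : ℕ) (k : ℤ) :
    qBin Q ((n:ℤ)+1) k = qBin Q (n:ℤ) (k-1) + qq^(2*k) * qBin Q (n:ℤ) k := by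
  rcases lt_trichotomy k 0 with hk | hk | hk
  · rw [qBin_eq_zero_left hk, qBin_eq_zero_left (by omega), qBin_eq_zero_left hk]; ring
  · subst hk
    rw [show ((n:ℤ)+1) = ((n+1:ℕ):ℤ) by push_cast; ring, qBin_zero, qBin_eq_zero_left (by norm_num),
      qBin_zero]
    norm_num
  · rcases le_or_gt k (n:ℤ) with hkn | hkn
    · -- main case: 1 ≤ k ≤ n
      obtain ⟨a, ha⟩ : ∃ a : ℕ, k = (a:ℤ) + 1 := ⟨(k-1).toNat, by omega⟩
      obtain ⟨b, hb⟩ : ∃ b : ℕ, n = a + 1 + b := ⟨n - (a+1), by omega⟩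
      subst ha hb
      rw [show ((a:ℤ)+1) = ((a+1:ℕ):ℤ) by push_cast; ring]
      rw [show (((a+1+b:ℕ)):ℤ)+1 = ((a+1+b+1:ℕ):ℤ) by push_cast; ring]
      rw [show ((a+1:ℕ):ℤ)-1 = ((a:ℕ):ℤ) by push_cast; ring]
      rw [qBin_nat _ _ (by omega), qBin_nat _ _ (by omega), qBin_nat _ _ (by omega)]
      rw [show qq^(2*((a+1:ℕ):ℤ)) = Q^(a+1) by
        rw [show (2*((a+1:ℕ):ℤ)) = ((2*(a+1):ℕ):ℤ) by push_cast; ring, zpow_natCast, pow_mul]]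
      rw [show a+1+b+1-(a+1) = b+1 by omega, show a+1+b-a = b+1 by omega,
        show a+1+b-(a+1) = b by omega]
      rw [P_succ (a+1+b), P_succ a, P_succ b]
      have e1 := P_ne_zero a; have e2 := P_ne_zero b; have e3 := P_ne_zero (a+1+b)
      have f1 := one_sub_Q_pow_ne_zero a; have f2 := one_sub_Q_pow_ne_zero b
      field_simp
      rw [show a+1+b+1 = (a+1)+(b+1) by ring, pow_add]
      ring
    · rcases lt_trichotomy k ((n:ℤ)+1) with h2 | h2 | h2
      · omega
      · subst h2
        rw [show (n:ℤ)+1 = ((n+1:ℕ):ℤ) by push_cast; ring, qBin_self,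
          show ((n+1:ℕ):ℤ)-1 = ((n:ℕ):ℤ) by push_cast; ring, qBin_self,
          qBin_eq_zero_right (by push_cast; omega)]
        ring
      · rw [qBin_eq_zero_right (by omega), qBin_eq_zero_right (by omega), qBin_eq_zero_right (by omega)]
        ring

lemma qBin_pascal' (n : ℕ) (k : ℤ) :
    qBin Q ((n:ℤ)+1) k = qBin Q (n:ℤ) k + qq^(2*((n:ℤ)+1-k)) * qBin Q (n:ℤ) (k-1) := by
  have h1 : qBin Q ((n:ℤ)+1) k = qBin Q ((n:ℤ)+1) ((n:ℤ)+1-k) := by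
    have := qBin_symm (n+1) k
    push_cast at this
    convert this using 3 <;> push_cast <;> ring
  rw [h1, qBin_pascal n ((n:ℤ)+1-k)]
  rw [show (n:ℤ)+1-k-1 = (n:ℤ)-k by ring]
  rw [← qBin_symm n k]
  congr 1
  rw [show (n:ℤ)+1-k = (n:ℤ)-(k-1) by ring, ← qBin_symm n (k-1)]

lemma lemA (j M : ℕ) : ∀ a : ℤ,
    ∑ i ∈ range (j+1), qq^(2*(i:ℤ)*((i:ℤ)+a)) * qBin Q (j:ℤ) (i:ℤ) * qBin Q (M:ℤ) (a+i)
      = qBin Q ((j:ℤ)+(M:ℤ)) (a+(j:ℤ)) := by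
  induction j with
  | zero =>
    intro a
    simp only [Nat.cast_zero, zero_add, range_one, sum_singleton]
    have h0 : qBin Q (0:ℤ) 0 = 1 := by exact_mod_cast qBin_zero 0
    rw [h0]
    norm_num
  | succ j ih =>
    intro a
    have step1 : ∀ i ∈ range (j+2),
        qq^(2*(i:ℤ)*((i:ℤ)+a)) * qBin Q ((j+1:ℕ):ℤ) (i:ℤ) * qBin Q (M:ℤ) (a+i)
        = qq^(2*(i:ℤ)*((i:ℤ)+a)) * qBin Q (j:ℤ) (i:ℤ) * qBin Q (M:ℤ) (a+i)
          + qq^(2*(i:ℤ)*((i:ℤ)+a)) * (qq^(2*((j:ℤ)+1-i)) * qBin Q (j:ℤ) ((i:ℤ)-1)) * qBin Q (M:ℤ) (a+i) := by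
      intro i _
      rw [show ((j+1:ℕ):ℤ) = (j:ℤ)+1 by push_cast; ring, qBin_pascal' j i]
      ring
    rw [Finset.sum_congr rfl step1, Finset.sum_add_distrib]
    have hA : ∑ i ∈ range (j+2),
        qq^(2*(i:ℤ)*((i:ℤ)+a)) * qBin Q (j:ℤ) (i:ℤ) * qBin Q (M:ℤ) (a+i)
        = qBin Q ((j:ℤ)+(M:ℤ)) (a+(j:ℤ)) := by
      rw [Finset.sum_range_succ, qBin_eq_zero_right (by exact_mod_cast Nat.lt_succ_self j)]
      simp only [mul_zero, zero_mul, add_zero]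
      exact ih a
    have hB : ∑ i ∈ range (j+2),
        qq^(2*(i:ℤ)*((i:ℤ)+a)) * (qq^(2*((j:ℤ)+1-i)) * qBin Q (j:ℤ) ((i:ℤ)-1)) * qBin Q (M:ℤ) (a+i)
        = qq^(2*(a+(j:ℤ)+1)) * qBin Q ((j:ℤ)+(M:ℤ)) (a+(j:ℤ)+1) := by
      rw [Finset.sum_range_succ']
      rw [show qBin Q (j:ℤ) (((0:ℕ):ℤ)-1) = 0 from qBin_eq_zero_left (by norm_num)]
      simp only [mul_zero, zero_mul, add_zero]
      have step2 : ∀ i ∈ range (j+1),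
          qq^(2*((i+1:ℕ):ℤ)*(((i+1:ℕ):ℤ)+a)) * (qq^(2*((j:ℤ)+1-((i+1:ℕ):ℤ))) * qBin Q (j:ℤ) (((i+1:ℕ):ℤ)-1)) * qBin Q (M:ℤ) (a+((i+1:ℕ):ℤ))
          = qq^(2*(a+(j:ℤ)+1)) * (qq^(2*(i:ℤ)*((i:ℤ)+(a+1))) * qBin Q (j:ℤ) (i:ℤ) * qBin Q (M:ℤ) ((a+1)+(i:ℤ))) := by
        intro i _
        have e : qq ^ (2*((i:ℤ)+1)*(((i:ℤ)+1)+a)) * qq ^ (2*((j:ℤ)+1-((i:ℤ)+1)))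
            = qq ^ (2*(a+(j:ℤ)+1)) * qq ^ (2*(i:ℤ)*((i:ℤ)+(a+1))) := by
          rw [← zpow_add₀ qq_ne_zero, ← zpow_add₀ qq_ne_zero]; congr 1; ring
        push_cast
        rw [show (i:ℤ)+1-1 = (i:ℤ) by ring, show a+((i:ℤ)+1) = (a+1)+(i:ℤ) by ring]
        calc qq^(2*((i:ℤ)+1)*(((i:ℤ)+1)+a)) * (qq^(2*((j:ℤ)+1-((i:ℤ)+1))) * qBin Q (j:ℤ) (i:ℤ)) * qBin Q (M:ℤ) ((a+1)+(i:ℤ))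
            = (qq ^ (2*((i:ℤ)+1)*(((i:ℤ)+1)+a)) * qq ^ (2*((j:ℤ)+1-((i:ℤ)+1)))) * (qBin Q (j:ℤ) (i:ℤ) * qBin Q (M:ℤ) ((a+1)+(i:ℤ))) := by ring
          _ = (qq ^ (2*(a+(j:ℤ)+1)) * qq ^ (2*(i:ℤ)*((i:ℤ)+(a+1)))) * (qBin Q (j:ℤ) (i:ℤ) * qBin Q (M:ℤ) ((a+1)+(i:ℤ))) := by rw [e]
          _ = qq^(2*(a+(j:ℤ)+1)) * (qq^(2*(i:ℤ)*((i:ℤ)+(a+1))) * qBin Q (j:ℤ) (i:ℤ) * qBin Q (M:ℤ) ((a+1)+(i:ℤ))) := by ring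
      rw [Finset.sum_congr rfl step2, ← Finset.mul_sum, ih (a+1),
        show a+1+(j:ℤ) = a+(j:ℤ)+1 by ring]
    rw [hA, hB]
    have hp := qBin_pascal (j+M) (a+(j:ℤ)+1)
    push_cast at hp
    rw [show a+(j:ℤ)+1-1 = a+(j:ℤ) by ring] at hp
    push_cast
    rw [show (j:ℤ)+1+(M:ℤ) = (j:ℤ)+(M:ℤ)+1 by ring, show a+((j:ℤ)+1) = a+(j:ℤ)+1 by ring]
    exact hp.symm

-- subset-of-subset lemma
lemma qBin_subset (N s t : ℕ) (h1 : t ≤ s) (h2 : s ≤ N) :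
    qBin Q (N:ℤ) (s:ℤ) * qBin Q (s:ℤ) (t:ℤ)
      = qBin Q (N:ℤ) (t:ℤ) * qBin Q ((N-t:ℕ):ℤ) ((s-t:ℕ):ℤ) := by
  rw [qBin_nat N s h2, qBin_nat s t h1, qBin_nat N t (by omega), qBin_nat (N-t) (s-t) (by omega)]
  rw [show N-t-(s-t) = N-s by omega]
  have := P_ne_zero N; have := P_ne_zero s; have := P_ne_zero t
  have := P_ne_zero (N-s); have := P_ne_zero (s-t); have := P_ne_zero (N-t)
  field_simp

lemma poch_prod (r m1 m2 : ℕ) :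
    P (r+m1+m2) / (P m1 * P m2 * P r)
      = qBin Q ((r+m1+m2:ℕ):ℤ) (r:ℤ) * qBin Q ((m1+m2:ℕ):ℤ) (m1:ℤ) := by
  rw [qBin_nat _ _ (by omega), qBin_nat _ _ (by omega)]
  rw [show r+m1+m2-r = m1+m2 by omega, show m1+m2-m1 = m2 by omega]
  have := P_ne_zero r; have := P_ne_zero m1; have := P_ne_zero m2
  have := P_ne_zero (m1+m2); have := P_ne_zero (r+m1+m2)
  field_simp

lemma triple (L : ℕ) (j m a : ℤ) (hm : 0 ≤ m) (hma : 0 ≤ m+a) (hmj : m ≤ j)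
    (hL : j+m+a ≤ (L:ℤ)) :
    qBin Q (L:ℤ) (j+m+a) * qBin Q (j+m+a) (j-m) * qBin Q (a+2*m) m
      = qBin Q (L:ℤ) j * qBin Q j m * qBin Q ((L:ℤ)-j) (a+m) := by
  obtain ⟨m', rfl⟩ : ∃ m' : ℕ, m = (m':ℤ) := ⟨m.toNat, by omega⟩
  obtain ⟨c', hc⟩ : ∃ c' : ℕ, (m':ℤ) + a = (c':ℤ) := ⟨((m':ℤ)+a).toNat, by omega⟩
  obtain ⟨j', rfl⟩ : ∃ j' : ℕ, j = (j':ℤ) := ⟨j.toNat, by omega⟩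
  have ha : a = (c':ℤ) - m' := by omega
  subst ha
  have hjL : j' ≤ L := by omega
  -- rewrite every index as a nat cast
  rw [show (j':ℤ)+m'+((c':ℤ)-m') = ((j'+c':ℕ):ℤ) by push_cast; ring,
      show (j':ℤ)-(m':ℤ) = ((j'-m':ℕ):ℤ) by push_cast [Nat.cast_sub (by exact_mod_cast hmj)]; ring,
      show ((c':ℤ)-m')+2*m' = ((c'+m':ℕ):ℤ) by push_cast; ring,
      show ((c':ℤ)-m')+m' = (c':ℤ) by ring,
      show (L:ℤ)-(j':ℤ) = ((L-j':ℕ):ℤ) by push_cast [Nat.cast_sub hjL]; ring]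
  have E1 := qBin_subset L (j'+c') (j'-m') (by omega) (by omega)
  have E2 := qBin_subset (L-(j'-m')) ((j'+c')-(j'-m')) m' (by omega) (by omega)
  have E3 := qBin_subset L j' (j'-m') (by omega) (by omega)
  rw [show (j'+c')-(j'-m') = c'+m' by omega] at E1 E2
  rw [show L-(j'-m')-m' = L-j' by omega, show c'+m'-m' = c' by omega] at E2
  rw [show j'-(j'-m') = m' by omega] at E3
  have E4 : qBin Q ((j':ℕ):ℤ) ((j'-m':ℕ):ℤ) = qBin Q (j':ℤ) (m':ℤ) := by
    rw [qBin_symm j' ((j'-m':ℕ):ℤ), show (j':ℤ)-((j'-m':ℕ):ℤ) = ((m':ℕ):ℤ) by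
      push_cast [Nat.cast_sub (by exact_mod_cast hmj)]; ring]
  calc qBin Q (L:ℤ) ((j'+c':ℕ):ℤ) * qBin Q ((j'+c':ℕ):ℤ) ((j'-m':ℕ):ℤ) * qBin Q ((c'+m':ℕ):ℤ) (m':ℤ)
      = (qBin Q (L:ℤ) ((j'-m':ℕ):ℤ) * (qBin Q ((L-(j'-m'):ℕ):ℤ) ((c'+m':ℕ):ℤ) * qBin Q ((c'+m':ℕ):ℤ) (m':ℤ))) := by
        rw [E1]; ring
    _ = qBin Q (L:ℤ) ((j'-m':ℕ):ℤ) * (qBin Q ((L-(j'-m'):ℕ):ℤ) (m':ℤ) * qBin Q ((L-j':ℕ):ℤ) (c':ℤ)) := by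
        rw [E2]
    _ = (qBin Q (L:ℤ) ((j'-m':ℕ):ℤ) * qBin Q ((L-(j'-m'):ℕ):ℤ) (m':ℤ)) * qBin Q ((L-j':ℕ):ℤ) (c':ℤ) := by
        ring
    _ = (qBin Q (L:ℤ) (j':ℤ) * qBin Q ((j':ℕ):ℤ) ((j'-m':ℕ):ℤ)) * qBin Q ((L-j':ℕ):ℤ) (c':ℤ) := by
        rw [← E3]
    _ = qBin Q (L:ℤ) (j':ℤ) * qBin Q (j':ℤ) (m':ℤ) * qBin Q ((L-j':ℕ):ℤ) (c':ℤ) := by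
        rw [E4]

-- sums over range ↔ Icc in ℤ
lemma sum_range_Icc (f : ℤ → RatFunc ℚ) (n : ℕ) :
    ∑ i ∈ range (n+1), f (i:ℤ) = ∑ i ∈ Finset.Icc (0:ℤ) (n:ℤ), f i := by
  refine Finset.sum_nbij' (fun i => (i:ℤ)) (fun i => i.toNat) ?_ ?_ ?_ ?_ ?_
  · intro x hx; simp at hx ⊢; omega
  · intro x hx; simp at hx ⊢; omega
  · intro x hx; simp
  · intro x hx; simp at hx ⊢; omega
  · intro x hx; rfl

-- the T0 term rewriting
lemma T0_term (a : ℤ) (k r : ℕ) (h1 : Even ((k:ℤ)-a-r)) (h2 : (r:ℤ) ≤ (k:ℤ)-|a|) :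
    qq^((r:ℤ)*((r:ℤ)-0)) * P k / (P (((k:ℤ)-a-r)/2).toNat * P (((k:ℤ)+a-r)/2).toNat * P r)
      = qq^((r:ℤ)*(r:ℤ)) * (qBin Q (k:ℤ) (r:ℤ) * qBin Q ((k:ℤ)-r) (((k:ℤ)-a-r)/2)) := by
  obtain ⟨c, hc⟩ := h1
  have habs : 0 ≤ (k:ℤ)-a-(r:ℤ) ∧ 0 ≤ (k:ℤ)+a-(r:ℤ) := by
    rcases abs_cases a with ⟨h,h'⟩|⟨h,h'⟩ <;> rw [h] at h2 <;> omega
  set m1 : ℕ := (((k:ℤ)-a-r)/2).toNat with hm1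
  set m2 : ℕ := (((k:ℤ)+a-r)/2).toNat with hm2
  have hm1' : (m1:ℤ) = c := by rw [hm1]; omega
  have hm2' : (m2:ℤ) = c + a := by rw [hm2]; omega
  have hk : r + m1 + m2 = k := by omega
  have e1 : qq^((r:ℤ)*((r:ℤ)-0)) = qq^((r:ℤ)*(r:ℤ)) := by norm_num
  rw [mul_div_assoc, e1, ← hk, poch_prod r m1 m2]
  have g1 : ((r+m1+m2:ℕ):ℤ) - (r:ℤ) = ((m1+m2:ℕ):ℤ) := by push_cast; ring
  have g2 : (((r+m1+m2:ℕ):ℤ) - a - (r:ℤ))/2 = (m1:ℤ) := by push_cast; omega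
  rw [g1, g2]

/-- summand of expanded RHS -/
noncomputable def uu (L : ℕ) (a k r : ℤ) : RatFunc ℚ :=
  if Even (k-a-r) ∧ r ≤ k-|a| then
    qq^(k^2-a^2) * qBin Q (L:ℤ) k * (qq^(r*r) * (qBin Q k r * qBin Q (k-r) ((k-a-r)/2)))
  else 0

/-- summand of expanded LHS -/
noncomputable def tt (L : ℕ) (a j m : ℤ) : RatFunc ℚ :=
  qq^(2*j*(j+a)) * qBin Q (L:ℤ) j * (qq^(2*m*(m+a)) * qBin Q j m * qBin Q ((L:ℤ)-j) (a+m))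

/-- F : single sum summand -/
noncomputable def FF (L : ℕ) (a j : ℤ) : RatFunc ℚ :=
  qq^(2*j*(j+a)) * qBin Q (L:ℤ) j * qBin Q (L:ℤ) (j+a)

lemma FF_vanish (L : ℕ) (a x : ℤ) (h : x < 0 ∨ (L:ℤ) < x ∨ x+a < 0 ∨ (L:ℤ) < x+a) :
    FF L a x = 0 := by
  unfold FF
  rcases h with h|h|h|h
  · rw [qBin_eq_zero_left h]; ring
  · rw [qBin_eq_zero_right h]; ring
  · rw [qBin_eq_zero_left h]; ring
  · rw [qBin_eq_zero_right h]; ring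

lemma lhs_to_F (L : ℕ) (a : ℤ) :
    qBin Q (2*(L:ℤ)) ((L:ℤ)-a) = ∑ j ∈ range (L+1), FF L a (j:ℤ) := by
  have h1 := lemA L L (-a)
  rw [show (L:ℤ)+(L:ℤ) = 2*(L:ℤ) by ring, show -a+(L:ℤ) = (L:ℤ)-a by ring] at h1
  have h2 : ∀ i ∈ range (L+1),
      qq^(2*(i:ℤ)*((i:ℤ)+(-a))) * qBin Q (L:ℤ) (i:ℤ) * qBin Q (L:ℤ) (-a+(i:ℤ))
        = FF L a ((i:ℤ)-a) := by
    intro i _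
    unfold FF
    rw [show ((i:ℤ)-a)+a = (i:ℤ) by ring, show -a+(i:ℤ) = (i:ℤ)-a by ring,
      show 2*(i:ℤ)*((i:ℤ)+(-a)) = 2*((i:ℤ)-a)*(i:ℤ) by ring]
    ring
  rw [← h1, Finset.sum_congr rfl h2]
  -- now: ∑ i ∈ range (L+1), FF L a (i-a) = ∑ j ∈ range (L+1), FF L a j
  rw [sum_range_Icc (fun x => FF L a (x-a)) L, sum_range_Icc (fun x => FF L a x) L]
  have hshift : ∑ x ∈ Finset.Icc (0:ℤ) (L:ℤ), FF L a (x-a)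
      = ∑ y ∈ Finset.Icc ((0:ℤ)+(-a)) ((L:ℤ)+(-a)), FF L a y := by
    rw [← Finset.map_add_right_Icc, Finset.sum_map]
    apply Finset.sum_congr rfl
    intro x _
    simp [addRightEmbedding, sub_eq_add_neg]
  rw [hshift]
  set S : Finset ℤ := Finset.Icc (max 0 (-a)) (min (L:ℤ) ((L:ℤ)-a)) with hS
  have e1 : ∑ y ∈ Finset.Icc ((0:ℤ)+(-a)) ((L:ℤ)+(-a)), FF L a y = ∑ y ∈ S, FF L a y := by
    refine (Finset.sum_subset ?_ ?_).symm
    · intro x hx; simp [hS] at hx ⊢; omega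
    · intro x hx hxs; simp [hS] at hx hxs
      exact FF_vanish L a x (by omega)
  have e2 : ∑ y ∈ Finset.Icc (0:ℤ) (L:ℤ), FF L a y = ∑ y ∈ S, FF L a y := by
    refine (Finset.sum_subset ?_ ?_).symm
    · intro x hx; simp [hS] at hx ⊢; omega
    · intro x hx hxs; simp [hS] at hx hxs
      exact FF_vanish L a x (by omega)
  rw [e1, e2]

lemma F_to_tt (L : ℕ) (a : ℤ) (j : ℕ) (hj : j ≤ L) :
    FF L a (j:ℤ) = ∑ m ∈ range (L+1), tt L a (j:ℤ) (m:ℤ) := by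
  have h1 := lemA j (L-j) a
  have hcast : ((j:ℤ)+((L-j:ℕ):ℤ)) = (L:ℤ) := by push_cast [Nat.cast_sub hj]; ring
  rw [hcast, show a+(j:ℤ) = (j:ℤ)+a by ring] at h1
  unfold FF
  rw [← h1, Finset.mul_sum]
  have h2 : ∀ m ∈ range (j+1),
      qq^(2*(j:ℤ)*((j:ℤ)+a)) * qBin Q (L:ℤ) (j:ℤ)
        * (qq^(2*(m:ℤ)*((m:ℤ)+a)) * qBin Q (j:ℤ) (m:ℤ) * qBin Q ((L-j:ℕ):ℤ) (a+(m:ℤ)))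
      = tt L a (j:ℤ) (m:ℤ) := by
    intro m _
    unfold tt
    rw [show ((L-j:ℕ):ℤ) = (L:ℤ)-(j:ℤ) by push_cast [Nat.cast_sub hj]; ring]
  rw [Finset.sum_congr rfl h2]
  -- extend range (j+1) to range (L+1)
  refine Finset.sum_subset ?_ ?_
  · exact Finset.range_subset_range.mpr (by omega)
  · intro m hm hm'
    simp at hm hm'
    unfold tt
    rw [qBin_eq_zero_right (n := (j:ℤ)) (by exact_mod_cast (by omega : (j:ℤ) < (m:ℤ)))]
    ring

lemma rhs_to_uu (L : ℕ) (a : ℤ) (k : ℕ) (hk : k ≤ L) :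
    qq ^ ((k:ℤ)^2 - a^2) * qBin Q (L:ℤ) (k:ℤ) * qT qq 0 k a
      = ∑ r ∈ range (L+1), uu L a (k:ℤ) (r:ℤ) := by
  unfold qT
  rw [Finset.mul_sum]
  have h2 : ∀ r ∈ range (k+1),
      qq ^ ((k:ℤ)^2 - a^2) * qBin Q (L:ℤ) (k:ℤ) *
        (if Even ((k:ℤ) - a - r) ∧ (r:ℤ) ≤ (k:ℤ) - |a| then
          qq ^ ((r:ℤ) * ((r:ℤ) - 0)) * qPoch (qq^2) k /
            (qPoch (qq^2) (((k:ℤ) - a - r) / 2).toNat *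
              qPoch (qq^2) (((k:ℤ) + a - r) / 2).toNat * qPoch (qq^2) r)
        else 0)
      = uu L a (k:ℤ) (r:ℤ) := by
    intro r _
    unfold uu
    by_cases hc : Even ((k:ℤ) - a - (r:ℤ)) ∧ (r:ℤ) ≤ (k:ℤ) - |a|
    · rw [if_pos hc, if_pos hc, show qPoch (qq^2) k = P k from rfl,
        show qPoch (qq^2) r = P r from rfl]
      rw [T0_term a k r hc.1 hc.2]
    · rw [if_neg hc, if_neg hc, mul_zero]
  rw [Finset.sum_congr rfl h2]
  refine Finset.sum_subset (Finset.range_subset_range.mpr (by omega)) ?_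
  intro r hr hr'
  simp at hr hr'
  unfold uu
  rw [if_neg]
  rintro ⟨-, habs⟩
  have : |a| ≥ 0 := abs_nonneg a
  omega

lemma double_eq (L : ℕ) (a : ℤ) :
    ∑ j ∈ Finset.Icc (0:ℤ) (L:ℤ), ∑ m ∈ Finset.Icc (0:ℤ) (L:ℤ), tt L a j m
      = ∑ k ∈ Finset.Icc (0:ℤ) (L:ℤ), ∑ r ∈ Finset.Icc (0:ℤ) (L:ℤ), uu L a k r := by
  rw [← Finset.sum_product' (s := Finset.Icc (0:ℤ) (L:ℤ)) (t := Finset.Icc (0:ℤ) (L:ℤ))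
    (f := fun j m => tt L a j m)]
  rw [← Finset.sum_product' (s := Finset.Icc (0:ℤ) (L:ℤ)) (t := Finset.Icc (0:ℤ) (L:ℤ))
    (f := fun k r => uu L a k r)]
  set A : Finset (ℤ × ℤ) := Finset.Icc (0:ℤ) (L:ℤ) ×ˢ Finset.Icc (0:ℤ) (L:ℤ) with hA
  have hT : ∑ p ∈ A, tt L a p.1 p.2
      = ∑ p ∈ A.filter (fun p => 0 ≤ p.2 + a ∧ p.1 + p.2 + a ≤ (L:ℤ) ∧ p.2 ≤ p.1),
          tt L a p.1 p.2 := by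
    refine (Finset.sum_filter_of_ne ?_).symm
    intro p hp hne
    by_contra hct
    apply hne
    unfold tt
    push_neg at hct
    rcases lt_trichotomy (p.2 + a) 0 with h|h|h
    · rw [qBin_eq_zero_left (n := (L:ℤ)-p.1) (by omega)]; ring
    · rcases lt_or_ge (L:ℤ) (p.1 + p.2 + a) with h2|h2
      · rw [qBin_eq_zero_right (n := (L:ℤ)-p.1) (k := a+p.2) (by omega)]; ring
      · have h3 : p.1 < p.2 := by
          have := hct (by omega) (by omega); omega
        rw [qBin_eq_zero_right (n := p.1) (k := p.2) h3]; ring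
    · rcases lt_or_ge (L:ℤ) (p.1 + p.2 + a) with h2|h2
      · rw [qBin_eq_zero_right (n := (L:ℤ)-p.1) (k := a+p.2) (by omega)]; ring
      · have h3 : p.1 < p.2 := by
          have := hct (by omega) (by omega); omega
        rw [qBin_eq_zero_right (n := p.1) (k := p.2) h3]; ring
  have hU : ∑ p ∈ A, uu L a p.1 p.2
      = ∑ p ∈ A.filter (fun p => Even (p.1 - a - p.2) ∧ p.2 ≤ p.1 - |a|),
          uu L a p.1 p.2 := by
    refine (Finset.sum_filter_of_ne ?_).symm
    intro p hp hne
    by_contra hcu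
    apply hne
    unfold uu
    rw [if_neg hcu]
  rw [hT, hU]
  refine Finset.sum_nbij' (fun p => (p.1 + p.2 + a, p.1 - p.2))
    (fun p => ((p.1 + p.2 - a)/2, (p.1 - a - p.2)/2)) ?_ ?_ ?_ ?_ ?_
  · -- forward membership
    intro p hp
    simp only [hA, Finset.mem_filter, Finset.mem_product, Finset.mem_Icc] at hp ⊢
    obtain ⟨⟨⟨h1, h2⟩, h3, h4⟩, h5, h6, h7⟩ := hp
    refine ⟨⟨⟨by omega, by omega⟩, by omega, by omega⟩, ⟨p.2, by ring⟩, ?_⟩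
    have habs : |a| ≤ a + 2*p.2 := abs_le.mpr ⟨by omega, by omega⟩
    omega
  · -- backward membership
    intro p hp
    simp only [hA, Finset.mem_filter, Finset.mem_product, Finset.mem_Icc] at hp ⊢
    obtain ⟨⟨⟨h1, h2⟩, h3, h4⟩, ⟨c, hc⟩, h7⟩ := hp
    have habs : 0 ≤ (p.1:ℤ) - a - p.2 ∧ 0 ≤ (p.1:ℤ) + a - p.2 := by
      rcases abs_cases a with ⟨h,h'⟩|⟨h,h'⟩ <;> rw [h] at h7 <;> omega
    refine ⟨⟨⟨by omega, by omega⟩, by omega, by omega⟩, by omega, by omega, by omega⟩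
  · -- left inverse
    intro p hp
    simp only [hA, Finset.mem_filter, Finset.mem_product, Finset.mem_Icc] at hp
    have e1 : (p.1 + p.2 + a + (p.1 - p.2) - a)/2 = p.1 := by omega
    have e2 : (p.1 + p.2 + a - a - (p.1 - p.2))/2 = p.2 := by omega
    exact Prod.ext e1 e2
  · -- right inverse
    intro p hp
    simp only [hA, Finset.mem_filter, Finset.mem_product, Finset.mem_Icc] at hp
    obtain ⟨⟨⟨h1, h2⟩, h3, h4⟩, ⟨c, hc⟩, h7⟩ := hp
    have e1 : (p.1 + p.2 - a)/2 + (p.1 - a - p.2)/2 + a = p.1 := by omega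
    have e2 : (p.1 + p.2 - a)/2 - (p.1 - a - p.2)/2 = p.2 := by omega
    exact Prod.ext e1 e2
  · -- values
    intro p hp
    simp only [hA, Finset.mem_filter, Finset.mem_product, Finset.mem_Icc] at hp
    obtain ⟨⟨⟨h1, h2⟩, h3, h4⟩, h5, h6, h7⟩ := hp
    set j := p.1; set m := p.2
    unfold tt uu
    have hcond : Even ((j + m + a) - a - (j - m)) ∧ (j - m) ≤ (j + m + a) - |a| := by
      constructor
      · exact ⟨m, by ring⟩
      · have habs : |a| ≤ a + 2*m := abs_le.mpr ⟨by omega, by omega⟩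
        omega
    rw [if_pos hcond]
    rw [show (j + m + a) - a - (j - m) = 2*m by ring]
    rw [show (2*m)/2 = m by omega]
    rw [show (j + m + a) - (j - m) = a + 2*m by ring]
    have hb := triple L j m a (by omega) (by omega) (by omega) (by omega)
    have he : qq^(2*j*(j+a)) * qq^(2*m*(m+a))
        = qq^((j+m+a)^2 - a^2) * qq^((j-m)*(j-m)) := by
      rw [← zpow_add₀ qq_ne_zero, ← zpow_add₀ qq_ne_zero]
      congr 1
      ring
    calc qq^(2*j*(j+a)) * qBin Q (L:ℤ) j * (qq^(2*m*(m+a)) * qBin Q j m * qBin Q ((L:ℤ)-j) (a+m))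
        = (qq^(2*j*(j+a)) * qq^(2*m*(m+a))) * (qBin Q (L:ℤ) j * qBin Q j m * qBin Q ((L:ℤ)-j) (a+m)) := by
          ring
      _ = (qq^((j+m+a)^2 - a^2) * qq^((j-m)*(j-m))) * (qBin Q (L:ℤ) (j+m+a) * qBin Q (j+m+a) (j-m) * qBin Q (a+2*m) m) := by
          rw [he, hb]
      _ = qq^((j+m+a)^2-a^2) * qBin Q (L:ℤ) (j+m+a) * (qq^((j-m)*(j-m)) * (qBin Q (j+m+a) (j-m) * qBin Q (a+2*m) m)) := by
          ring

theorem stmt5 (L : ℕ) (a : ℤ) :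
    qBin (qq ^ 2) (2 * (L : ℤ)) ((L : ℤ) - a) =
      ∑ k ∈ Finset.range (L + 1),
        qq ^ ((k : ℤ) ^ 2 - a ^ 2) * qBin (qq ^ 2) (L : ℤ) (k : ℤ) * qT qq 0 k a := by
  have step2 : ∑ j ∈ range (L+1), FF L a (j:ℤ)
      = ∑ j ∈ range (L+1), ∑ m ∈ range (L+1), tt L a (j:ℤ) (m:ℤ) :=
    Finset.sum_congr rfl (fun j hj => F_to_tt L a j (by simp at hj; omega))
  have step3 : ∑ j ∈ range (L+1), ∑ m ∈ range (L+1), tt L a (j:ℤ) (m:ℤ)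
      = ∑ j ∈ Finset.Icc (0:ℤ) (L:ℤ), ∑ m ∈ Finset.Icc (0:ℤ) (L:ℤ), tt L a j m := by
    rw [← sum_range_Icc (fun j => ∑ m ∈ Finset.Icc (0:ℤ) (L:ℤ), tt L a j m) L]
    exact Finset.sum_congr rfl (fun j _ => sum_range_Icc (fun m => tt L a (j:ℤ) m) L)
  have step5 : ∑ k ∈ Finset.Icc (0:ℤ) (L:ℤ), ∑ r ∈ Finset.Icc (0:ℤ) (L:ℤ), uu L a k r
      = ∑ k ∈ range (L+1), ∑ r ∈ range (L+1), uu L a (k:ℤ) (r:ℤ) := by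
    rw [← sum_range_Icc (fun k => ∑ r ∈ Finset.Icc (0:ℤ) (L:ℤ), uu L a k r) L]
    exact Finset.sum_congr rfl (fun k _ => (sum_range_Icc (fun r => uu L a (k:ℤ) r) L).symm)
  have step6 : ∑ k ∈ range (L+1), ∑ r ∈ range (L+1), uu L a (k:ℤ) (r:ℤ)
      = ∑ k ∈ range (L+1), qq ^ ((k:ℤ)^2 - a^2) * qBin Q (L:ℤ) (k:ℤ) * qT qq 0 k a :=
    Finset.sum_congr rfl (fun k hk => (rhs_to_uu L a k (by simp at hk; omega)).symm)
  calc qBin (qq ^ 2) (2 * (L:ℤ)) ((L:ℤ) - a)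
      = ∑ j ∈ range (L+1), FF L a (j:ℤ) := lhs_to_F L a
    _ = ∑ j ∈ range (L+1), ∑ m ∈ range (L+1), tt L a (j:ℤ) (m:ℤ) := step2
    _ = ∑ j ∈ Finset.Icc (0:ℤ) (L:ℤ), ∑ m ∈ Finset.Icc (0:ℤ) (L:ℤ), tt L a j m := step3
    _ = ∑ k ∈ Finset.Icc (0:ℤ) (L:ℤ), ∑ r ∈ Finset.Icc (0:ℤ) (L:ℤ), uu L a k r := double_eq L a
    _ = ∑ k ∈ range (L+1), ∑ r ∈ range (L+1), uu L a (k:ℤ) (r:ℤ) := step5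
    _ = ∑ k ∈ range (L+1), qq ^ ((k:ℤ)^2 - a^2) * qBin Q (L:ℤ) (k:ℤ) * qT qq 0 k a := step6
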